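/- Let $(a_t)_{t \ge 2}$ and $(b_t)_{t \ge 2}$ be sequences of nonnegative reals with $b_t \le a_t + 2\mu\sqrt{a_t} + \mu^2$ for each $t$, where $\mu = \Gamma/(\lambda T^{3/2})$ for some $T \ge 2$, $\Gamma, \lambda > 0$. Suppose $a_{t+1} \le (1 - 2/t) b_t + \Gamma^2/(\lambda^2 t^2)$ for $2 \le t < T$ and $a_2 \le \Gamma^2/(4\lambda^2)$. Then $b_t \le 7\Gamma^2/(\lambda^2 t)$ for all $2 \le t \le T$. -/
import Mathlib

set_option maxHeartbeats 1000000 in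
theorem stmt_1 (Γ lam : ℝ) (hΓ : 0 < Γ) (hlam : 0 < lam)
    (T : ℕ) (hT : 2 ≤ T)
    (μ : ℝ) (hμ : μ = Γ / (lam * (T : ℝ) ^ ((3 : ℝ) / 2)))
    (a b : ℕ → ℝ) (ha : ∀ t, 0 ≤ a t) (hb : ∀ t, 0 ≤ b t)
    (hab : ∀ t : ℕ, 2 ≤ t → b t ≤ a t + 2 * μ * Real.sqrt (a t) + μ ^ 2)
    (hrec : ∀ t : ℕ, 2 ≤ t → t < T →
      a (t + 1) ≤ (1 - 2 / (t : ℝ)) * b t + Γ ^ 2 / (lam ^ 2 * (t : ℝ) ^ 2))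
    (hinit : a 2 ≤ Γ ^ 2 / (4 * lam ^ 2)) :
    ∀ t : ℕ, 2 ≤ t → t ≤ T → b t ≤ 7 * Γ ^ 2 / (lam ^ 2 * (t : ℝ)) := by
  have hT2 : (2:ℝ) ≤ (T:ℝ) := by exact_mod_cast hT
  have hTpos : (0:ℝ) < (T:ℝ) := by linarith
  have hμ' : μ = Γ / (lam * ((T:ℝ) * Real.sqrt (T:ℝ))) := by
    rw [hμ]
    congr 2
    rw [show (3:ℝ)/2 = 1 + 1/2 by norm_num, Real.rpow_add hTpos, Real.rpow_one,
      ← Real.sqrt_eq_rpow]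
  have hμ0 : 0 ≤ μ := by rw [hμ']; positivity
  have sqrtle : ∀ y M : ℝ, 0 ≤ M → y ≤ M^2 → Real.sqrt y ≤ M := by
    intro y M hM hy
    calc Real.sqrt y ≤ Real.sqrt (M^2) := Real.sqrt_le_sqrt hy
      _ = M := Real.sqrt_sq hM
  have hμle : ∀ s : ℕ, 2 ≤ s → s ≤ T → μ ≤ Γ / (lam * ((s:ℝ) * Real.sqrt (s:ℝ))) := by
    intro s hs2 hsT
    have hs2' : (2:ℝ) ≤ (s:ℝ) := by exact_mod_cast hs2
    have hsT' : (s:ℝ) ≤ (T:ℝ) := by exact_mod_cast hsT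
    have hspos : (0:ℝ) < (s:ℝ) := by linarith
    have hsq : (0:ℝ) < Real.sqrt (s:ℝ) := Real.sqrt_pos.mpr hspos
    have h1 : (s:ℝ) * Real.sqrt (s:ℝ) ≤ (T:ℝ) * Real.sqrt (T:ℝ) :=
      mul_le_mul hsT' (Real.sqrt_le_sqrt hsT') (Real.sqrt_nonneg _) (by linarith)
    rw [hμ']
    have := mul_pos hlam (mul_pos hspos hsq)
    gcongr
  -- the b chain
  have hbchain : ∀ s : ℕ, 2 ≤ s → s ≤ T → a s ≤ 5.9049 * Γ^2 / (lam^2 * (s:ℝ)) →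
      b s ≤ 5.9049 * Γ^2 / (lam^2 * (s:ℝ)) + 4.86 * Γ^2 / (lam^2 * (s:ℝ)^2)
        + Γ^2 / (lam^2 * (s:ℝ)^3) := by
    intro s hs2 hsT haS
    have hs2' : (2:ℝ) ≤ (s:ℝ) := by exact_mod_cast hs2
    have hspos : (0:ℝ) < (s:ℝ) := by linarith
    set sx := Real.sqrt (s:ℝ) with hsxdef
    have hsx : sx^2 = (s:ℝ) := Real.sq_sqrt (le_of_lt hspos)
    have hsxpos : 0 < sx := Real.sqrt_pos.mpr hspos
    have h1 : Real.sqrt (a s) ≤ 2.43 * Γ / (lam * sx) := by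
      apply sqrtle _ _ (by positivity)
      have he : (2.43 * Γ / (lam * sx))^2 = 5.9049 * Γ^2 / (lam^2 * (s:ℝ)) := by
        rw [div_pow, mul_pow, mul_pow, hsx]; norm_num
      rw [he]; exact haS
    have h2 : μ ≤ Γ / (lam * ((s:ℝ) * sx)) := hμle s hs2 hsT
    have hμ0' : 0 ≤ μ := hμ0
    calc b s ≤ a s + 2 * μ * Real.sqrt (a s) + μ^2 := hab s hs2
      _ ≤ 5.9049 * Γ^2 / (lam^2 * (s:ℝ)) +
          2 * (Γ / (lam * ((s:ℝ) * sx))) * (2.43 * Γ / (lam * sx)) +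
          (Γ / (lam * ((s:ℝ) * sx)))^2 := by
        gcongr <;> positivity
      _ = 5.9049 * Γ^2 / (lam^2 * (s:ℝ)) + 4.86 * Γ^2 / (lam^2 * (s:ℝ)^2)
          + Γ^2 / (lam^2 * (s:ℝ)^3) := by
        rw [show (s:ℝ) = sx^2 from hsx.symm]
        field_simp
        ring
  -- the main induction
  have haK : ∀ s : ℕ, 2 ≤ s → s ≤ T → a s ≤ 5.9049 * Γ^2 / (lam^2 * (s:ℝ)) := by
    intro s hs2
    induction s, hs2 using Nat.le_induction with
    | base =>
      intro _
      have h : Γ^2 / (4 * lam^2) ≤ 5.9049 * Γ^2 / (lam^2 * ((2:ℕ):ℝ)) := by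
        rw [div_le_div_iff₀ (by positivity) (by positivity)]
        push_cast
        nlinarith [mul_pos (mul_pos hΓ hΓ) (mul_pos hlam hlam)]
      exact hinit.trans h
    | succ s hs ih =>
      intro hsT1
      have hsT : s ≤ T := le_trans (Nat.le_succ s) hsT1
      have hslt : s < T := hsT1
      have hs2' : (2:ℝ) ≤ (s:ℝ) := by exact_mod_cast hs
      have hspos : (0:ℝ) < (s:ℝ) := by linarith
      have hbS := hbchain s hs hsT (ih hsT)
      have h1 : 0 ≤ 1 - 2 / (s:ℝ) := by
        have : 2 / (s:ℝ) ≤ 1 := by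
          rw [div_le_one hspos]; linarith
        linarith
      have key : (1 - 2/(s:ℝ)) * (5.9049 * Γ^2 / (lam^2 * (s:ℝ)) + 4.86 * Γ^2 / (lam^2 * (s:ℝ)^2)
            + Γ^2 / (lam^2 * (s:ℝ)^3)) + Γ^2 / (lam^2 * (s:ℝ)^2)
          ≤ 5.9049 * Γ^2 / (lam^2 * ((s:ℝ)+1)) := by
        rw [← sub_nonneg]
        have heq : 5.9049 * Γ^2 / (lam^2 * ((s:ℝ)+1)) -
            ((1 - 2/(s:ℝ)) * (5.9049 * Γ^2 / (lam^2 * (s:ℝ)) + 4.86 * Γ^2 / (lam^2 * (s:ℝ)^2)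
              + Γ^2 / (lam^2 * (s:ℝ)^3)) + Γ^2 / (lam^2 * (s:ℝ)^2))
            = Γ^2 * (0.0449 * (s:ℝ)^3 + 14.6698 * (s:ℝ)^2 + 10.72 * (s:ℝ) + 2)
              / (lam^2 * ((s:ℝ)^4 * ((s:ℝ)+1))) := by
          field_simp
          ring
        rw [heq]
        positivity
      calc a (s+1) ≤ (1 - 2/(s:ℝ)) * b s + Γ^2 / (lam^2 * (s:ℝ)^2) := hrec s hs hslt
        _ ≤ (1 - 2/(s:ℝ)) * (5.9049 * Γ^2 / (lam^2 * (s:ℝ)) + 4.86 * Γ^2 / (lam^2 * (s:ℝ)^2)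
            + Γ^2 / (lam^2 * (s:ℝ)^3)) + Γ^2 / (lam^2 * (s:ℝ)^2) := by gcongr
        _ ≤ 5.9049 * Γ^2 / (lam^2 * ((s:ℝ)+1)) := key
        _ = 5.9049 * Γ^2 / (lam^2 * ((s+1:ℕ):ℝ)) := by push_cast; ring
  -- small helpers for t = 2,3,4
  have hμ36 : μ ≤ 0.36 * Γ / lam := by
    have h2 := hμle 2 (le_refl 2) hT
    rw [show ((2:ℕ):ℝ) = 2 by norm_num] at h2
    have hsq2 : (1.414:ℝ) ≤ Real.sqrt 2 := by
      have h := Real.sq_sqrt (show (0:ℝ) ≤ 2 by norm_num)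
      nlinarith [Real.sqrt_nonneg 2]
    have hsqpos : (0:ℝ) < Real.sqrt 2 := by linarith
    have : Γ / (lam * ((2:ℝ) * Real.sqrt 2)) ≤ 0.36 * Γ / lam := by
      rw [div_le_div_iff₀ (by positivity) hlam]
      nlinarith [mul_pos hΓ hlam, hsq2]
    linarith
  have ha2sqrt : Real.sqrt (a 2) ≤ 0.5 * Γ / lam := by
    apply sqrtle _ _ (by positivity)
    have : (0.5 * Γ / lam)^2 = Γ^2 / (4 * lam^2) := by
      field_simp; ring
    rw [this]; exact hinit
  have hb2 : b 2 ≤ 0.74 * (Γ^2 / lam^2) := by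
    calc b 2 ≤ a 2 + 2 * μ * Real.sqrt (a 2) + μ^2 := hab 2 (le_refl 2)
      _ ≤ Γ^2/(4*lam^2) + 2 * (0.36 * Γ / lam) * (0.5 * Γ / lam) + (0.36 * Γ / lam)^2 := by
        gcongr <;> positivity
      _ ≤ 0.74 * (Γ^2 / lam^2) := by
        rw [← sub_nonneg]
        have heq : 0.74 * (Γ^2 / lam^2) -
            (Γ^2/(4*lam^2) + 2 * (0.36 * Γ / lam) * (0.5 * Γ / lam) + (0.36 * Γ / lam)^2)
            = 0.0004 * Γ^2 / lam^2 := by field_simp; ring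
        rw [heq]; positivity
  intro t ht htT
  rcases Nat.lt_or_ge t 5 with h5 | h5
  · -- t = 2, 3, 4
    interval_cases t
    · -- t = 2
      calc b 2 ≤ 0.74 * (Γ^2/lam^2) := hb2
        _ ≤ 7 * Γ^2 / (lam^2 * ((2:ℕ):ℝ)) := by
          rw [← sub_nonneg]
          have heq : 7 * Γ^2 / (lam^2 * ((2:ℕ):ℝ)) - 0.74 * (Γ^2/lam^2)
              = 2.76 * Γ^2 / lam^2 := by push_cast; field_simp; try ring
          rw [heq]; positivity
    · -- t = 3
      have h3 := hrec 2 (le_refl 2) (by omega)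
      have ha3 : a 3 ≤ Γ^2 / (4 * lam^2) := by
        have : (1 - 2/((2:ℕ):ℝ)) = 0 := by norm_num
        rw [this, zero_mul, zero_add] at h3
        calc a 3 ≤ Γ^2 / (lam^2 * ((2:ℕ):ℝ)^2) := h3
          _ = Γ^2 / (4 * lam^2) := by push_cast; ring_nf
      have ha3sqrt : Real.sqrt (a 3) ≤ 0.5 * Γ / lam := by
        apply sqrtle _ _ (by positivity)
        have : (0.5 * Γ / lam)^2 = Γ^2 / (4 * lam^2) := by field_simp; ring
        rw [this]; exact ha3
      calc b 3 ≤ a 3 + 2 * μ * Real.sqrt (a 3) + μ^2 := hab 3 (by norm_num)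
        _ ≤ Γ^2/(4*lam^2) + 2 * (0.36 * Γ / lam) * (0.5 * Γ / lam) + (0.36 * Γ / lam)^2 := by
          gcongr <;> positivity
        _ ≤ 7 * Γ^2 / (lam^2 * ((3:ℕ):ℝ)) := by
          rw [← sub_nonneg]
          have heq : 7 * Γ^2 / (lam^2 * ((3:ℕ):ℝ)) -
              (Γ^2/(4*lam^2) + 2 * (0.36 * Γ / lam) * (0.5 * Γ / lam) + (0.36 * Γ / lam)^2)
              = (7/3 - 0.7396) * Γ^2 / lam^2 := by push_cast; field_simp; try ring
          rw [heq]; positivity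
    · -- t = 4
      have h3 := hrec 2 (le_refl 2) (by omega)
      have ha3 : a 3 ≤ Γ^2 / (4 * lam^2) := by
        have : (1 - 2/((2:ℕ):ℝ)) = 0 := by norm_num
        rw [this, zero_mul, zero_add] at h3
        calc a 3 ≤ Γ^2 / (lam^2 * ((2:ℕ):ℝ)^2) := h3
          _ = Γ^2 / (4 * lam^2) := by push_cast; ring_nf
      have ha3sqrt : Real.sqrt (a 3) ≤ 0.5 * Γ / lam := by
        apply sqrtle _ _ (by positivity)
        have : (0.5 * Γ / lam)^2 = Γ^2 / (4 * lam^2) := by field_simp; ring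
        rw [this]; exact ha3
      have hb3 : b 3 ≤ 0.74 * (Γ^2 / lam^2) := by
        calc b 3 ≤ a 3 + 2 * μ * Real.sqrt (a 3) + μ^2 := hab 3 (by norm_num)
          _ ≤ Γ^2/(4*lam^2) + 2 * (0.36 * Γ / lam) * (0.5 * Γ / lam) + (0.36 * Γ / lam)^2 := by
            gcongr <;> positivity
          _ ≤ 0.74 * (Γ^2 / lam^2) := by
            rw [← sub_nonneg]
            have heq : 0.74 * (Γ^2 / lam^2) -
                (Γ^2/(4*lam^2) + 2 * (0.36 * Γ / lam) * (0.5 * Γ / lam) + (0.36 * Γ / lam)^2)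
                = 0.0004 * Γ^2 / lam^2 := by field_simp; ring
            rw [heq]; positivity
      have h4 := hrec 3 (by norm_num) (by omega)
      have ha4 : a 4 ≤ 0.36 * (Γ^2 / lam^2) := by
        have h13 : (0:ℝ) ≤ 1 - 2/((3:ℕ):ℝ) := by norm_num
        have step : (1 - 2/((3:ℕ):ℝ)) * b 3 + Γ^2 / (lam^2 * ((3:ℕ):ℝ)^2)
            ≤ (1 - 2/((3:ℕ):ℝ)) * (0.74 * (Γ^2 / lam^2)) + Γ^2 / (lam^2 * ((3:ℕ):ℝ)^2) := by
          gcongr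
        have final : (1 - 2/((3:ℕ):ℝ)) * (0.74 * (Γ^2 / lam^2)) + Γ^2 / (lam^2 * ((3:ℕ):ℝ)^2)
            ≤ 0.36 * (Γ^2 / lam^2) := by
          rw [← sub_nonneg]
          have heq : 0.36 * (Γ^2 / lam^2) -
              ((1 - 2/((3:ℕ):ℝ)) * (0.74 * (Γ^2 / lam^2)) + Γ^2 / (lam^2 * ((3:ℕ):ℝ)^2))
              = (1/450) * Γ^2 / lam^2 := by push_cast; field_simp; try ring
          rw [heq]; positivity
        linarith [h4]
      have ha4sqrt : Real.sqrt (a 4) ≤ 0.6 * Γ / lam := by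
        apply sqrtle _ _ (by positivity)
        have : (0.6 * Γ / lam)^2 = 0.36 * (Γ^2 / lam^2) := by field_simp; ring
        rw [this]; exact ha4
      have hμ4 : μ ≤ Γ / (lam * 8) := by
        have h := hμle 4 (by norm_num) (by omega)
        have hs4 : Real.sqrt ((4:ℕ):ℝ) = 2 := by
          rw [show ((4:ℕ):ℝ) = (2:ℝ)^2 by norm_num, Real.sqrt_sq (by norm_num)]
        rw [hs4] at h
        calc μ ≤ Γ / (lam * (((4:ℕ):ℝ) * 2)) := h
          _ = Γ / (lam * 8) := by norm_num
      calc b 4 ≤ a 4 + 2 * μ * Real.sqrt (a 4) + μ^2 := hab 4 (by norm_num)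
        _ ≤ 0.36 * (Γ^2/lam^2) + 2 * (Γ / (lam * 8)) * (0.6 * Γ / lam) + (Γ / (lam * 8))^2 := by
          gcongr <;> positivity
        _ ≤ 7 * Γ^2 / (lam^2 * ((4:ℕ):ℝ)) := by
          rw [← sub_nonneg]
          have heq : 7 * Γ^2 / (lam^2 * ((4:ℕ):ℝ)) -
              (0.36 * (Γ^2/lam^2) + 2 * (Γ / (lam * 8)) * (0.6 * Γ / lam) + (Γ / (lam * 8))^2)
              = 1.224375 * Γ^2 / lam^2 := by push_cast; field_simp; try ring
          rw [heq]; positivity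
  · -- t ≥ 5
    have hbK := hbchain t ht htT (haK t ht htT)
    have hx5 : (5:ℝ) ≤ (t:ℝ) := by exact_mod_cast h5
    have hxpos : (0:ℝ) < (t:ℝ) := by linarith
    rw [← sub_nonneg]
    have heq : 7 * Γ^2 / (lam^2 * (t:ℝ)) -
        (5.9049 * Γ^2 / (lam^2 * (t:ℝ)) + 4.86 * Γ^2 / (lam^2 * (t:ℝ)^2) + Γ^2 / (lam^2 * (t:ℝ)^3))
        = Γ^2 * (1.0951 * (t:ℝ)^2 - 4.86 * (t:ℝ) - 1) / (lam^2 * (t:ℝ)^3) := by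
      field_simp; ring
    have hnum : 0 ≤ Γ^2 * (1.0951 * (t:ℝ)^2 - 4.86 * (t:ℝ) - 1) :=
      mul_nonneg (sq_nonneg Γ) (by nlinarith)
    have : 0 ≤ 7 * Γ^2 / (lam^2 * (t:ℝ)) -
        (5.9049 * Γ^2 / (lam^2 * (t:ℝ)) + 4.86 * Γ^2 / (lam^2 * (t:ℝ)^2) + Γ^2 / (lam^2 * (t:ℝ)^3)) := by
      rw [heq]; exact div_nonneg hnum (by positivity)
    linarith
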